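/- Let x be either the relativistic map x_R(y) = −e^{−y} or the CGHS map x_C(y) = −log(1 + e^{−y}). Let g be a Schwartz function with ĝ(k) = 0 for all k ≤ 0, and set ǧ(y) = x′(y) g(x(y)). Then ∫_0^∞ |ǧ̂(p)|²/(2p) dp < ∞ if and only if G(0) = ∫_{−∞}^0 g(x) dx = 0. Consequently the total mean number of extra particles created by the one-particle state Ω_g, which equals ∫_0^∞ |ǧ̂(p)|²/p dp, is finite if and only if G(0) = 0. -/

import Mathlib

open MeasureTheory Set Filter Complex
open scoped ENNReal Real FourierTransform

/-- The Fourier transform `f̂(p) = (2π)^{-1/2} ∫ f(y) e^{-ipy} dy`. -/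
noncomputable def ft (f : ℝ → ℂ) (p : ℝ) : ℂ :=
  (Real.sqrt (2 * Real.pi) : ℂ)⁻¹ *
    ∫ y : ℝ, f y * Complex.exp (-Complex.I * (p : ℂ) * (y : ℂ))

/-- `F̌(k) = (2π)^{-1/2} ∫ f(y) e^{-ik x(y)} dy`. -/
noncomputable def Fk (x : ℝ → ℝ) (f : ℝ → ℂ) (k : ℝ) : ℂ :=
  (Real.sqrt (2 * Real.pi) : ℂ)⁻¹ *
    ∫ y : ℝ, f y * Complex.exp (-Complex.I * (k : ℂ) * (x y : ℂ))

/-- The relativistic black-hole coordinate map `x_R(y) = -e^{-y}`. -/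
noncomputable def xR (y : ℝ) : ℝ := -Real.exp (-y)

/-- The CGHS black-hole coordinate map `x_C(y) = -log(1+e^{-y})`. -/
noncomputable def xC (y : ℝ) : ℝ := -Real.log (1 + Real.exp (-y))

/-- The mean number of spontaneously created particles `N̄_o[f]`. -/
noncomputable def No (x : ℝ → ℝ) (f : ℝ → ℂ) : ℝ≥0∞ :=
  ∫⁻ k in Set.Ioi (0:ℝ), ENNReal.ofReal (‖Fk x f (-k)‖ ^ 2 / (2 * k))

/-- The thermal mean particle number `N̄^Th_β[f]` at inverse temperature `β`. -/
noncomputable def Nth (β : ℝ) (f : ℝ → ℂ) : ℝ≥0∞ :=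
  ∫⁻ p in Set.Ioi (0:ℝ),
    ENNReal.ofReal (‖ft f p‖ ^ 2 / (2 * p * (Real.exp (β * p) - 1)))

/-- translate of `f` by `y₀`. -/
noncomputable def tr (f : ℝ → ℂ) (y₀ : ℝ) : ℝ → ℂ := fun y => f (y - y₀)

/-- The outgoing function `ǧ(y) = x'(y) g(x(y))` associated with an incoming `g`. -/
noncomputable def gout (x : ℝ → ℝ) (g : ℝ → ℂ) (y : ℝ) : ℂ :=
  ((deriv x y : ℝ) : ℂ) * g (x y)

lemma crit (h : ℝ → ℂ) (c₀ : ℂ) (C₁ C₂ : ℝ)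
    (hb : ∀ p : ℝ, 0 < p → p ≤ 1 → ‖h p - c₀‖ ≤ C₁ * p)
    (hc : ∀ p : ℝ, 1 ≤ p → ‖h p‖ ≤ C₂ / p) :
    (∫⁻ p in Set.Ioi (0:ℝ), ENNReal.ofReal (‖h p‖ ^ 2 / (2 * p))) < ⊤ ↔ c₀ = 0 := by
  have hC₁ : 0 ≤ C₁ := by
    have := hb 1 one_pos le_rfl
    nlinarith [norm_nonneg (h 1 - c₀)]
  constructor
  · -- contrapositive: c₀ ≠ 0 → ⊤
    intro hfin
    by_contra hc₀
    set ε := ‖c₀‖ with hε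
    have hεpos : 0 < ε := norm_pos_iff.mpr hc₀
    set δ : ℝ := min 1 (ε / (2 * (C₁ + 1))) with hδdef
    have hδpos : 0 < δ := lt_min one_pos (by positivity)
    have hδ1 : δ ≤ 1 := min_le_left _ _
    -- lower bound ‖h p‖ ≥ ε/2 on Ioo 0 δ
    have key : ∀ p ∈ Ioo (0:ℝ) δ, ε ^ 2 / 8 / p ≤ ‖h p‖ ^ 2 / (2 * p) := by
      intro p hp
      have hp0 : 0 < p := hp.1
      have hp1 : p ≤ 1 := le_trans hp.2.le hδ1
      have h1 : ‖h p - c₀‖ ≤ ε / 2 := by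
        have h2 : C₁ * p ≤ (C₁ + 1) * p := by nlinarith
        have h3 : (C₁ + 1) * p ≤ (C₁ + 1) * (ε / (2 * (C₁ + 1))) := by
          have := le_trans hp.2.le (min_le_right 1 (ε / (2 * (C₁ + 1))))
          nlinarith
        have h4 : (C₁ + 1) * (ε / (2 * (C₁ + 1))) = ε / 2 := by
          field_simp
        calc ‖h p - c₀‖ ≤ C₁ * p := hb p hp0 hp1
          _ ≤ (C₁ + 1) * p := h2
          _ ≤ ε / 2 := by rw [← h4]; exact h3
      have h5 : ε / 2 ≤ ‖h p‖ := by
        have := norm_sub_norm_le (h p - c₀ + c₀) (c₀)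
        simp only [sub_add_cancel] at this
        have h6 : ‖h p‖ ≥ ‖c₀‖ - ‖h p - c₀‖ := by
          have := norm_sub_norm_le c₀ (h p)
          have h7 := norm_sub_rev (h p) c₀
          calc ‖c₀‖ - ‖h p - c₀‖ = ‖c₀‖ - ‖c₀ - h p‖ := by rw [← h7]
            _ ≤ ‖h p‖ := by linarith [norm_sub_norm_le c₀ (h p)]
        linarith
      have : ε ^ 2 / 4 ≤ ‖h p‖ ^ 2 := by nlinarith [norm_nonneg (h p)]
      rw [div_div, div_le_div_iff₀ (by positivity) (by positivity)]
      nlinarith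
    -- the integral over Ioo 0 δ of ε²/8/p is infinite
    have hsub : ∫⁻ p in Ioo (0:ℝ) δ, ENNReal.ofReal (ε ^ 2 / 8 / p)
        ≤ ∫⁻ p in Set.Ioi (0:ℝ), ENNReal.ofReal (‖h p‖ ^ 2 / (2 * p)) := by
      have s1 : (∫⁻ p in Ioo (0:ℝ) δ, ENNReal.ofReal (ε ^ 2 / 8 / p)) ≤
          ∫⁻ p in Ioo (0:ℝ) δ, ENNReal.ofReal (‖h p‖ ^ 2 / (2 * p)) :=
        setLIntegral_mono' measurableSet_Ioo fun p hp => ENNReal.ofReal_le_ofReal (key p hp)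
      exact s1.trans (lintegral_mono_set Ioo_subset_Ioi_self)
    have htop : (∫⁻ p in Ioo (0:ℝ) δ, ENNReal.ofReal (ε ^ 2 / 8 / p)) = ⊤ := by
      by_contra hne
      have hfin2 : IntegrableOn (fun p => ε ^ 2 / 8 / p) (Ioo (0:ℝ) δ) := by
        constructor
        · exact (by fun_prop : Measurable fun p : ℝ => ε ^ 2 / 8 / p).aestronglyMeasurable
        · rw [hasFiniteIntegral_iff_ofReal]
          · exact lt_top_iff_ne_top.mpr hne
          · filter_upwards [ae_restrict_mem measurableSet_Ioo] with p hp
            have h0 := hp.1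
            positivity
      have hrw : IntegrableOn (fun p : ℝ => p ^ (-1 : ℝ)) (Ioo (0:ℝ) δ) := by
        have h8 : IntegrableOn (fun p => 8 / ε ^ 2 * (ε ^ 2 / 8 / p)) (Ioo (0:ℝ) δ) :=
          hfin2.const_mul (8 / ε ^ 2)
        refine h8.congr_fun (fun p hp => ?_) measurableSet_Ioo
        have hpne : p ≠ 0 := ne_of_gt hp.1
        have hεne : ε ≠ 0 := ne_of_gt hεpos
        rw [Real.rpow_neg hp.1.le, Real.rpow_one]
        field_simp
      rw [intervalIntegral.integrableOn_Ioo_rpow_iff hδpos] at hrw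
      norm_num at hrw
    exact hfin.ne (top_le_iff.mp (le_trans (le_trans (eq_top_iff.mp htop) hsub) le_rfl))
  · -- c₀ = 0 → finite
    intro hc₀
    subst hc₀
    have hb' : ∀ p : ℝ, 0 < p → p ≤ 1 → ‖h p‖ ≤ C₁ * p := by
      intro p h1 h2; simpa using hb p h1 h2
    have hsplit : (Ioi (0:ℝ)) = Ioc (0:ℝ) 1 ∪ Ioi 1 := (Ioc_union_Ioi_eq_Ioi zero_le_one).symm
    rw [hsplit, lintegral_union measurableSet_Ioi Ioc_disjoint_Ioi_same]
    have t1 : (∫⁻ p in Ioc (0:ℝ) 1, ENNReal.ofReal (‖h p‖ ^ 2 / (2 * p))) ≤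
        ∫⁻ _ in Ioc (0:ℝ) 1, ENNReal.ofReal (C₁ ^ 2 / 2) := by
      refine setLIntegral_mono' measurableSet_Ioc fun p hp => ?_
      refine ENNReal.ofReal_le_ofReal ?_
      have h1 := hb' p hp.1 hp.2
      rw [div_le_iff₀ (mul_pos two_pos hp.1)]
      nlinarith [hp.1, hp.2, norm_nonneg (h p)]
    have t2 : (∫⁻ p in Ioi (1:ℝ), ENNReal.ofReal (‖h p‖ ^ 2 / (2 * p))) ≤
        ∫⁻ p in Ioi (1:ℝ), ENNReal.ofReal (C₂ ^ 2 / 2 * p ^ (-3 : ℝ)) := by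
      refine setLIntegral_mono' measurableSet_Ioi fun p hp => ?_
      refine ENNReal.ofReal_le_ofReal ?_
      have hp1 : (1:ℝ) ≤ p := hp.le
      have hp0 : (0:ℝ) < p := lt_of_lt_of_le one_pos hp1
      have h1 := hc p hp1
      have h2 : ‖h p‖ ^ 2 ≤ C₂ ^ 2 / p ^ 2 := by
        rw [← div_pow]
        exact pow_le_pow_left₀ (norm_nonneg _) h1 2
      rw [Real.rpow_neg hp0.le]
      rw [show ((3:ℝ)) = ((3:ℕ):ℝ) by norm_num, Real.rpow_natCast]
      rw [div_le_iff₀ (mul_pos two_pos hp0)]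
      have : C₂ ^ 2 / 2 * (p ^ 3)⁻¹ * (2 * p) = C₂ ^ 2 / p ^ 2 := by
        field_simp
      rw [this]
      exact h2
    have f1 : (∫⁻ _ in Ioc (0:ℝ) 1, ENNReal.ofReal (C₁ ^ 2 / 2)) < ⊤ := by
      rw [setLIntegral_const]
      exact ENNReal.mul_lt_top ENNReal.ofReal_lt_top (by simp [Real.volume_Ioc])
    have f2 : (∫⁻ p in Ioi (1:ℝ), ENNReal.ofReal (C₂ ^ 2 / 2 * p ^ (-3 : ℝ))) < ⊤ := by
      have hint : IntegrableOn (fun p : ℝ => C₂ ^ 2 / 2 * p ^ (-3 : ℝ)) (Ioi 1) :=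
        (integrableOn_Ioi_rpow_of_lt (by norm_num) one_pos).const_mul _
      exact hint.setLIntegral_lt_top
    exact ENNReal.add_lt_top.mpr ⟨lt_of_le_of_lt t1 f1, lt_of_le_of_lt t2 f2⟩

lemma ft_eq_fourier (f : ℝ → ℂ) (p : ℝ) :
    ft f p = (Real.sqrt (2 * Real.pi) : ℂ)⁻¹ * 𝓕 f (p / (2 * Real.pi)) := by
  rw [ft, Real.fourier_real_eq_integral_exp_smul]
  congr 1
  refine integral_congr_ae (Eventually.of_forall fun y => ?_)
  simp only [smul_eq_mul]
  rw [mul_comm]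
  congr 1
  congr 1
  push_cast
  have hπ : (Real.pi : ℂ) ≠ 0 := Complex.ofReal_ne_zero.mpr Real.pi_ne_zero
  field_simp

lemma ft_zero_eq (f : ℝ → ℂ) : ft f 0 = (Real.sqrt (2 * Real.pi) : ℂ)⁻¹ * ∫ y, f y := by
  rw [ft]
  congr 1
  refine integral_congr_ae (Eventually.of_forall fun y => ?_)
  simp

lemma norm_exp_neg_I_mul (p y : ℝ) : ‖Complex.exp (-Complex.I * (p:ℂ) * (y:ℂ))‖ = 1 := by
  simp [Complex.norm_exp]

lemma ft_tail (f : ℝ → ℂ) (hf : Integrable f) (h'f : Differentiable ℝ f)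
    (hf' : Integrable (deriv f)) {p : ℝ} (hp : 0 < p) :
    ‖ft f p‖ ≤ (Real.sqrt (2 * Real.pi))⁻¹ * (∫ y, ‖deriv f y‖) / p := by
  have key := congrFun (Real.fourier_deriv hf h'f hf') (p / (2 * Real.pi))
  have hπ : (0:ℝ) < 2 * Real.pi := by positivity
  have h1 : ‖𝓕 (deriv f) (p / (2 * Real.pi))‖ ≤ ∫ y, ‖deriv f y‖ :=
    VectorFourier.norm_fourierIntegral_le_integral_norm _ _ _ _ _
  rw [key] at h1
  rw [norm_smul] at h1
  have h2 : ‖2 * ↑Real.pi * Complex.I * ↑(p / (2 * Real.pi))‖ = p := by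
    simp only [norm_mul, Complex.norm_I, Complex.norm_ofNat, Complex.norm_real]
    rw [Real.norm_eq_abs, Real.norm_eq_abs, abs_of_pos Real.pi_pos,
      abs_of_pos (div_pos hp hπ)]
    field_simp
  rw [h2] at h1
  rw [ft_eq_fourier, norm_mul]
  have h3 : ‖((Real.sqrt (2 * Real.pi) : ℝ) : ℂ)⁻¹‖ = (Real.sqrt (2 * Real.pi))⁻¹ := by
    rw [norm_inv, Complex.norm_real, Real.norm_eq_abs,
      abs_of_pos (Real.sqrt_pos.mpr hπ)]
  rw [h3]
  have hc : (0:ℝ) ≤ (Real.sqrt (2 * Real.pi))⁻¹ := by positivity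
  calc (Real.sqrt (2 * Real.pi))⁻¹ * ‖𝓕 f (p / (2 * Real.pi))‖
      = (Real.sqrt (2 * Real.pi))⁻¹ * ((p * ‖𝓕 f (p / (2 * Real.pi))‖) / p) := by
        field_simp
    _ ≤ (Real.sqrt (2 * Real.pi))⁻¹ * ((∫ y, ‖deriv f y‖) / p) := by gcongr
    _ = (Real.sqrt (2 * Real.pi))⁻¹ * (∫ y, ‖deriv f y‖) / p := (mul_div_assoc _ _ _).symm

lemma exp_sub_one_bound (θ : ℝ) : ‖Complex.exp (Complex.I * θ) - 1‖ ≤ 2 * |θ| := by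
  rcases le_or_gt ‖(Complex.I * (θ:ℂ))‖ 1 with h | h
  · have := Complex.norm_exp_sub_one_le (x := Complex.I * θ) h
    have habs : ‖Complex.I * (θ:ℂ)‖ = |θ| := by
      simp
    rw [habs] at this
    exact this
  · have h2 : ‖Complex.exp (Complex.I * θ)‖ = 1 := by
      simp [Complex.norm_exp]
    have h3 : ‖Complex.exp (Complex.I * θ) - 1‖ ≤ 2 := by
      calc ‖Complex.exp (Complex.I * θ) - 1‖ ≤ ‖Complex.exp (Complex.I * θ)‖ + ‖(1:ℂ)‖ :=
            norm_sub_le _ _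
        _ = 2 := by rw [h2]; norm_num
    have h4 : (1:ℝ) < |θ| := by simpa using h
    linarith

lemma integrable_mul_exp (f : ℝ → ℂ) (hf : Integrable f) (p : ℝ) :
    Integrable (fun y => f y * Complex.exp (-Complex.I * (p:ℂ) * (y:ℂ))) := by
  refine Integrable.mono' hf.norm ?_ ?_
  · exact hf.aestronglyMeasurable.mul
      ((Complex.continuous_exp.comp (by continuity)).aestronglyMeasurable)
  · filter_upwards with y
    rw [norm_mul, norm_exp_neg_I_mul, mul_one]

lemma ft_lip (f : ℝ → ℂ) (hf : Integrable f)
    (hf1 : Integrable (fun y : ℝ => |y| * ‖f y‖)) {p : ℝ} (hp : 0 ≤ p) :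
    ‖ft f p - ft f 0‖ ≤
      (Real.sqrt (2 * Real.pi))⁻¹ * (2 * ∫ y : ℝ, |y| * ‖f y‖) * p := by
  have h0 : ft f p - ft f 0 = (Real.sqrt (2 * Real.pi) : ℂ)⁻¹ *
      ∫ y : ℝ, f y * (Complex.exp (-Complex.I * (p:ℂ) * (y:ℂ)) - 1) := by
    rw [ft, ft, ← mul_sub]
    congr 1
    rw [← integral_sub (integrable_mul_exp f hf p) (by simpa using integrable_mul_exp f hf 0)]
    refine integral_congr_ae (Eventually.of_forall fun y => ?_)
    simp [mul_sub]
  rw [h0, norm_mul]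
  have h3 : ‖((Real.sqrt (2 * Real.pi) : ℝ) : ℂ)⁻¹‖ = (Real.sqrt (2 * Real.pi))⁻¹ := by
    rw [norm_inv, Complex.norm_real, Real.norm_eq_abs,
      abs_of_pos (Real.sqrt_pos.mpr (by positivity))]
  rw [h3, mul_assoc, mul_comm (2 * _) p, ← mul_assoc]
  rw [mul_assoc ((Real.sqrt (2 * Real.pi))⁻¹)]
  refine mul_le_mul_of_nonneg_left ?_ (by positivity)
  calc ‖∫ y : ℝ, f y * (Complex.exp (-Complex.I * (p:ℂ) * (y:ℂ)) - 1)‖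
      ≤ ∫ y : ℝ, ‖f y * (Complex.exp (-Complex.I * (p:ℂ) * (y:ℂ)) - 1)‖ :=
        norm_integral_le_integral_norm _
    _ ≤ ∫ y : ℝ, 2 * p * (|y| * ‖f y‖) := by
        refine integral_mono_of_nonneg (Eventually.of_forall fun y => norm_nonneg _)
          (by exact (hf1.const_mul (2 * p))) (Eventually.of_forall fun y => ?_)
        simp only []
        rw [norm_mul]
        have hb : ‖Complex.exp (-Complex.I * (p:ℂ) * (y:ℂ)) - 1‖ ≤ 2 * |p * y| := by
          have := exp_sub_one_bound (-(p * y))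
          have he : Complex.exp (Complex.I * ((-(p*y) : ℝ) : ℂ)) =
              Complex.exp (-Complex.I * (p:ℂ) * (y:ℂ)) := by
            congr 1
            push_cast
            ring
          rw [he] at this
          simpa [abs_neg] using this
        calc ‖f y‖ * ‖Complex.exp (-Complex.I * (p:ℂ) * (y:ℂ)) - 1‖
            ≤ ‖f y‖ * (2 * |p * y|) := by
              exact mul_le_mul_of_nonneg_left hb (norm_nonneg _)
          _ = 2 * p * (|y| * ‖f y‖) := by
              rw [abs_mul, _root_.abs_of_nonneg hp]; ring
    _ = p * (2 * ∫ y : ℝ, |y| * ‖f y‖) := by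
        rw [MeasureTheory.integral_const_mul]; ring

section COV
variable {x x' : ℝ → ℝ}

lemma cov_inj (hd : ∀ y, HasDerivAt x (x' y) y) (hpos : ∀ y, 0 < x' y) :
    Function.Injective x :=
  (strictMono_of_hasDerivAt_pos hd hpos).injective

lemma cov_integral (hd : ∀ y, HasDerivAt x (x' y) y) (hpos : ∀ y, 0 < x' y)
    (himg : range x = Iio 0) (F : ℝ → ℂ) :
    ∫ t in Iio (0:ℝ), F t = ∫ y : ℝ, (x' y : ℂ) * F (x y) := by
  have h1 : Iio (0:ℝ) = x '' univ := by rw [image_univ, himg]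
  rw [h1, integral_image_eq_integral_abs_deriv_smul MeasurableSet.univ
    (fun y _ => (hd y).hasDerivWithinAt) ((cov_inj hd hpos).injOn)]
  rw [MeasureTheory.setIntegral_univ]
  refine integral_congr_ae (Eventually.of_forall fun y => ?_)
  simp only []
  rw [abs_of_pos (hpos y), real_smul]

lemma cov_integrableOn (hd : ∀ y, HasDerivAt x (x' y) y) (hpos : ∀ y, 0 < x' y)
    (himg : range x = Iio 0) (F : ℝ → ℂ) (hF : IntegrableOn F (Iio 0)) :
    Integrable (fun y => (x' y : ℂ) * F (x y)) := by
  have h1 : Iio (0:ℝ) = x '' univ := by rw [image_univ, himg]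
  rw [h1] at hF
  rw [integrableOn_image_iff_integrableOn_abs_deriv_smul MeasurableSet.univ
    (fun y _ => (hd y).hasDerivWithinAt) ((cov_inj hd hpos).injOn)] at hF
  rw [integrableOn_univ] at hF
  refine hF.congr ?_
  refine Eventually.of_forall fun y => ?_
  simp only []
  rw [abs_of_pos (hpos y), real_smul]
end COV

noncomputable def maj (t : ℝ) : ℝ := 2 * (-t) ^ (-(1/2) : ℝ) + |t| + 1

lemma maj_measurable : Measurable maj := by
  unfold maj
  exact ((measurable_neg.pow_const _).const_mul 2).add (measurable_abs) |>.add measurable_const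

lemma rpow_refl_integrable :
    IntegrableOn (fun t : ℝ => (-t) ^ (-(1/2) : ℝ)) (Ioo (-1 : ℝ) 0) := by
  have hB1 : IntegrableOn (fun s : ℝ => s ^ (-(1/2) : ℝ)) (Ioo (0:ℝ) 1) := by
    rw [intervalIntegral.integrableOn_Ioo_rpow_iff one_pos]
    norm_num
  rw [← integrable_indicator_iff measurableSet_Ioo] at hB1 ⊢
  have := hB1.comp_neg
  refine this.congr (Eventually.of_forall fun t => ?_)
  by_cases ht : t ∈ Ioo (-1:ℝ) 0
  · have ht' : -t ∈ Ioo (0:ℝ) 1 := by constructor <;> [linarith [ht.2]; linarith [ht.1]]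
    simp only []
    rw [indicator_of_mem ht', indicator_of_mem ht]
  · have ht' : -t ∉ Ioo (0:ℝ) 1 := by
      intro hc
      exact ht ⟨by linarith [hc.2], by linarith [hc.1]⟩
    simp only []
    rw [indicator_of_notMem ht', indicator_of_notMem ht]

lemma schwartz_bound (u : SchwartzMap ℝ ℂ) : ∃ M : ℝ, 0 ≤ M ∧ ∀ t, ‖u t‖ ≤ M := by
  obtain ⟨C, hCpos, hC⟩ := u.decay 0 0
  refine ⟨C, hCpos.le, fun t => ?_⟩
  simpa using hC t

lemma maj_integrableOn (u : SchwartzMap ℝ ℂ) :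
    IntegrableOn (fun t => maj t * ‖u t‖) (Iio (0:ℝ)) := by
  obtain ⟨M, hM0, hM⟩ := schwartz_bound u
  have hmeas : Measurable fun t => maj t * ‖u t‖ :=
    maj_measurable.mul (measurable_norm.comp u.continuous.measurable)
  have hsplit : Iio (0:ℝ) = Iio (-1:ℝ) ∪ Ico (-1:ℝ) 0 := by
    rw [Iio_union_Ico_eq_Iio]; norm_num
  rw [hsplit]
  refine IntegrableOn.union ?_ ?_
  · -- on Iio (-1): maj t ≤ 3 + |t|
    have hbig : Integrable (fun t : ℝ => (3 + |t|) * ‖u t‖) := by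
      have h1 : Integrable (fun t : ℝ => ‖u t‖) := u.integrable.norm
      have h2 : Integrable (fun t : ℝ => |t| * ‖u t‖) := by
        have := u.integrable_pow_mul volume 1
        simpa using this
      have := (h1.const_mul 3).add h2
      refine this.congr (Eventually.of_forall fun t => ?_)
      simp only [Pi.add_apply]
      ring
    refine (hbig.integrableOn).mono' hmeas.aestronglyMeasurable ?_
    filter_upwards [ae_restrict_mem measurableSet_Iio] with t ht
    have ht1 : (1:ℝ) ≤ -t := by have : t < -1 := ht; linarith
    have hr : (-t) ^ (-(1/2) : ℝ) ≤ 1 :=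
      Real.rpow_le_one_of_one_le_of_nonpos ht1 (by norm_num)
    have h0 : (0:ℝ) ≤ (-t) ^ (-(1/2) : ℝ) := Real.rpow_nonneg (by linarith) _
    rw [Real.norm_eq_abs, abs_mul, _root_.abs_of_nonneg (by unfold maj; positivity), abs_norm]
    refine mul_le_mul_of_nonneg_right ?_ (norm_nonneg _)
    unfold maj
    linarith
  · rw [integrableOn_Ico_iff_integrableOn_Ioo]
    have hbig : IntegrableOn (fun t : ℝ => ((2 * (-t) ^ (-(1/2):ℝ)) + 2) * M)
        (Ioo (-1:ℝ) 0) := by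
      refine Integrable.mul_const ?_ M
      exact (rpow_refl_integrable.const_mul 2).add ((integrableOn_const_iff).mpr
        (Or.inr (by simp [Real.volume_Ioo])))
    refine hbig.mono' hmeas.aestronglyMeasurable ?_
    filter_upwards [ae_restrict_mem measurableSet_Ioo] with t ht
    have h0 : (0:ℝ) ≤ (-t) ^ (-(1/2) : ℝ) := Real.rpow_nonneg (by linarith [ht.2]) _
    have habs : |t| ≤ 1 := abs_le.mpr ⟨by linarith [ht.1], by linarith [ht.2]⟩
    rw [Real.norm_eq_abs, abs_mul, _root_.abs_of_nonneg (by unfold maj; positivity), abs_norm]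
    calc maj t * ‖u t‖ ≤ maj t * M :=
          mul_le_mul_of_nonneg_left (hM t) (by unfold maj; positivity)
      _ ≤ ((2 * (-t) ^ (-(1/2):ℝ)) + 2) * M := by
          refine mul_le_mul_of_nonneg_right ?_ hM0
          unfold maj; linarith


lemma master (x x' x'' w v yx : ℝ → ℝ)
    (hd : ∀ y, HasDerivAt x (x' y) y)
    (hd2 : ∀ y, HasDerivAt x' (x'' y) y)
    (hpos : ∀ y, 0 < x' y)
    (himg : range x = Iio 0)
    (hw : ∀ y, x' y = w (x y))
    (hv : ∀ y, x'' y = x' y * v (x y))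
    (hyx : ∀ y, yx (x y) = y)
    (hwb : ∀ t, t < 0 → |w t| ≤ 1 + |t|)
    (hvb : ∀ t, t < 0 → |v t| ≤ 1)
    (hyb : ∀ t, t < 0 → |yx t| ≤ maj t)
    (hyc : ContinuousOn yx (Iio 0))
    (hwc : ContinuousOn w (Iio 0))
    (hvc : ContinuousOn v (Iio 0))
    (g : SchwartzMap ℝ ℂ) :
    ((∫⁻ p in Set.Ioi (0:ℝ),
        ENNReal.ofReal (‖ft (gout x ⇑g) p‖ ^ 2 / (2 * p))) < ⊤ ↔
      (∫ t in Set.Iio (0:ℝ), g t) = 0) := by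
  classical
  set gv : ℝ → ℂ := fun y => (x' y : ℂ) * g (x y) with hgv
  have hgout : gout x ⇑g = gv := by
    funext y
    rw [gout, (hd y).deriv]
  have hxneg : ∀ y, x y < 0 := by
    intro y
    have : x y ∈ Iio 0 := himg ▸ mem_range_self y
    exact this
  -- basic integrability
  have Igo : Integrable gv :=
    cov_integrableOn hd hpos himg ⇑g g.integrable.integrableOn
  have hval : ∫ t in Iio (0:ℝ), g t = ∫ y, gv y :=
    cov_integral hd hpos himg ⇑g
  -- first moment
  have hyg : Integrable (fun y : ℝ => |y| * ‖gv y‖) := by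
    set F₀ : ℝ → ℂ := fun t => ((yx t : ℝ) : ℂ) * g t with hF₀
    have hF₀m : AEStronglyMeasurable F₀ (volume.restrict (Iio (0:ℝ))) := by
      refine ContinuousOn.aestronglyMeasurable ?_ measurableSet_Iio
      exact (Complex.continuous_ofReal.comp_continuousOn hyc).mul g.continuous.continuousOn
    have hF₀i : IntegrableOn F₀ (Iio (0:ℝ)) := by
      refine (maj_integrableOn g).mono' hF₀m ?_
      filter_upwards [ae_restrict_mem measurableSet_Iio] with t ht
      rw [hF₀]
      simp only [norm_mul, Complex.norm_real, Real.norm_eq_abs]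
      exact mul_le_mul_of_nonneg_right (hyb t ht) (norm_nonneg _)
    have h1 := cov_integrableOn hd hpos himg F₀ hF₀i
    have h2 : (fun y => (x' y : ℂ) * F₀ (x y)) = fun y : ℝ => (y : ℂ) * gv y := by
      funext y
      rw [hF₀, hgv]
      simp only []
      rw [hyx y]
      ring
    rw [h2] at h1
    refine h1.norm.congr (Eventually.of_forall fun y => ?_)
    simp [norm_mul]
  -- derivative
  set dg := SchwartzMap.derivCLM ℝ ℂ g with hdg
  have hgd : ∀ t, HasDerivAt (⇑g) (dg t) t := by
    intro t
    rw [hdg, SchwartzMap.derivCLM_apply]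
    exact (g.differentiable t).hasDerivAt
  set D : ℝ → ℂ := fun y =>
    (x'' y : ℂ) * g (x y) + (x' y : ℂ) * ((x' y : ℂ) * dg (x y)) with hD
  have hDd : ∀ y, HasDerivAt gv (D y) y := by
    intro y
    have h1 : HasDerivAt (fun y => ((x' y : ℝ) : ℂ)) ((x'' y : ℂ)) y := (hd2 y).ofReal_comp
    have h2 : HasDerivAt (fun y => g (x y)) ((x' y) • (dg (x y))) y :=
      (hgd (x y)).scomp y (hd y)
    have h3 := h1.mul h2
    have he : (x'' y : ℂ) * g (x y) + (x' y : ℂ) * ((x' y) • (dg (x y))) = D y := by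
      rw [hD]
      simp only []
      rw [Complex.real_smul]
    exact he ▸ h3
  have hderivgv : deriv gv = D := funext fun y => (hDd y).deriv
  have hdiffgv : Differentiable ℝ gv := fun y => (hDd y).differentiableAt
  have ID : Integrable D := by
    have term1 : Integrable (fun y => (x'' y : ℂ) * g (x y)) := by
      set F₁ : ℝ → ℂ := fun t => ((v t : ℝ) : ℂ) * g t with hF₁
      have hF₁m : AEStronglyMeasurable F₁ (volume.restrict (Iio (0:ℝ))) :=
        ContinuousOn.aestronglyMeasurable
          ((Complex.continuous_ofReal.comp_continuousOn hvc).mul g.continuous.continuousOn)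
          measurableSet_Iio
      have hF₁i : IntegrableOn F₁ (Iio (0:ℝ)) := by
        refine (g.integrable.norm.integrableOn).mono' hF₁m ?_
        filter_upwards [ae_restrict_mem measurableSet_Iio] with t ht
        rw [hF₁]
        simp only [norm_mul, Complex.norm_real, Real.norm_eq_abs]
        calc |v t| * ‖g t‖ ≤ 1 * ‖g t‖ :=
              mul_le_mul_of_nonneg_right (hvb t ht) (norm_nonneg _)
          _ = ‖g t‖ := one_mul _
      have h1 := cov_integrableOn hd hpos himg F₁ hF₁i
      refine h1.congr (Eventually.of_forall fun y => ?_)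
      rw [hF₁]
      simp only []
      rw [hv y]
      push_cast
      ring
    have term2 : Integrable (fun y => (x' y : ℂ) * ((x' y : ℂ) * dg (x y))) := by
      set F₂ : ℝ → ℂ := fun t => ((w t : ℝ) : ℂ) * dg t with hF₂
      have hF₂m : AEStronglyMeasurable F₂ (volume.restrict (Iio (0:ℝ))) :=
        ContinuousOn.aestronglyMeasurable
          ((Complex.continuous_ofReal.comp_continuousOn hwc).mul dg.continuous.continuousOn)
          measurableSet_Iio
      have hF₂i : IntegrableOn F₂ (Iio (0:ℝ)) := by
        refine (maj_integrableOn dg).mono' hF₂m ?_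
        filter_upwards [ae_restrict_mem measurableSet_Iio] with t ht
        rw [hF₂]
        simp only [norm_mul, Complex.norm_real, Real.norm_eq_abs]
        refine mul_le_mul_of_nonneg_right ?_ (norm_nonneg _)
        refine le_trans (hwb t ht) ?_
        unfold maj
        have h0 : (0:ℝ) ≤ (-t) ^ (-(1/2) : ℝ) := Real.rpow_nonneg (by linarith [ht.out]) _
        linarith
      have h1 := cov_integrableOn hd hpos himg F₂ hF₂i
      refine h1.congr (Eventually.of_forall fun y => ?_)
      rw [hF₂]
      simp only []
      rw [← hw y]
    exact term1.add term2
  have ID' : Integrable (deriv gv) := hderivgv ▸ ID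
  -- constants and criterion
  set C₁ : ℝ := (Real.sqrt (2 * Real.pi))⁻¹ * (2 * ∫ y : ℝ, |y| * ‖gv y‖) with hC₁
  set C₂ : ℝ := (Real.sqrt (2 * Real.pi))⁻¹ * (∫ y, ‖deriv gv y‖) with hC₂
  have hb : ∀ p : ℝ, 0 < p → p ≤ 1 → ‖ft gv p - ft gv 0‖ ≤ C₁ * p := by
    intro p hp0 _
    exact ft_lip gv Igo hyg hp0.le
  have hc : ∀ p : ℝ, 1 ≤ p → ‖ft gv p‖ ≤ C₂ / p := by
    intro p hp1
    have := ft_tail gv Igo hdiffgv ID' (lt_of_lt_of_le one_pos hp1)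
    rw [hC₂]
    rw [mul_div_assoc] at this ⊢
    exact le_trans this (le_refl _)
  rw [hgout]
  rw [crit (ft gv) (ft gv 0) C₁ C₂ hb hc]
  rw [ft_zero_eq, ← hval]
  have hne : ((Real.sqrt (2 * Real.pi) : ℝ) : ℂ)⁻¹ ≠ 0 := by
    simp only [ne_eq, inv_eq_zero, Complex.ofReal_eq_zero]
    positivity
  constructor
  · intro h
    rcases mul_eq_zero.mp h with h | h
    · exact absurd h hne
    · exact h
  · intro h
    rw [h, mul_zero]



lemma log_abs_bound {s : ℝ} (hs : 0 < s) :
    |Real.log s| ≤ 2 * s ^ (-(1/2) : ℝ) + s + 1 := by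
  have h0 : (0:ℝ) ≤ s ^ (-(1/2) : ℝ) := Real.rpow_nonneg hs.le _
  rcases le_or_gt s 1 with h | h
  · have hlog : Real.log s ≤ 0 := Real.log_nonpos hs.le h
    rw [abs_of_nonpos hlog]
    have h1 : Real.log (s ^ (-(1/2) : ℝ)) = (-(1/2)) * Real.log s := Real.log_rpow hs _
    have h2 : Real.log (s ^ (-(1/2) : ℝ)) ≤ s ^ (-(1/2) : ℝ) - 1 :=
      Real.log_le_sub_one_of_pos (Real.rpow_pos_of_pos hs _)
    nlinarith
  · rw [_root_.abs_of_nonneg (Real.log_nonneg h.le)]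
    have h2 : Real.log s ≤ s - 1 := Real.log_le_sub_one_of_pos hs
    linarith

-- ### x_R facts
lemma xR_deriv (y : ℝ) : HasDerivAt xR (Real.exp (-y)) y := by
  have h1 : HasDerivAt (fun y : ℝ => Real.exp (-y)) (Real.exp (-y) * (-1)) y :=
    (Real.hasDerivAt_exp (-y)).comp y (hasDerivAt_neg y)
  have h2 : HasDerivAt xR (-(Real.exp (-y) * (-1))) y := by have := h1.neg; exact this
  convert h2 using 1
  ring

lemma xR_deriv2 (y : ℝ) : HasDerivAt (fun y : ℝ => Real.exp (-y)) (-Real.exp (-y)) y := by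
  have h1 : HasDerivAt (fun y : ℝ => Real.exp (-y)) (Real.exp (-y) * (-1)) y :=
    (Real.hasDerivAt_exp (-y)).comp y (hasDerivAt_neg y)
  convert h1 using 1
  ring

lemma xR_range : range xR = Iio 0 := by
  ext t
  constructor
  · rintro ⟨y, rfl⟩
    have : 0 < Real.exp (-y) := Real.exp_pos _
    simpa [xR] using this
  · intro ht
    have ht' : (0:ℝ) < -t := by simpa using ht.out
    refine ⟨-Real.log (-t), ?_⟩
    rw [xR, neg_neg, Real.exp_log ht']
    ring

lemma xR_yx (y : ℝ) : -Real.log (-xR y) = y := by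
  rw [xR, neg_neg, Real.log_exp, neg_neg]

lemma xR_yb {t : ℝ} (ht : t < 0) : |-Real.log (-t)| ≤ maj t := by
  rw [abs_neg]
  have := log_abs_bound (s := -t) (by linarith)
  rw [maj, abs_of_neg ht]
  linarith

-- ### x_C facts
noncomputable def xC' (y : ℝ) : ℝ := Real.exp (-y) / (1 + Real.exp (-y))
noncomputable def xC'' (y : ℝ) : ℝ := -(Real.exp (-y) / (1 + Real.exp (-y)) ^ 2)

lemma one_add_exp_pos (y : ℝ) : (0:ℝ) < 1 + Real.exp (-y) := by positivity

lemma xC_deriv (y : ℝ) : HasDerivAt xC (xC' y) y := by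
  have h1 : HasDerivAt (fun y : ℝ => 1 + Real.exp (-y)) (-Real.exp (-y)) y :=
    ((xR_deriv2 y).const_add 1)
  have h2 : HasDerivAt (fun y : ℝ => Real.log (1 + Real.exp (-y)))
      ((1 + Real.exp (-y))⁻¹ * (-Real.exp (-y))) y := by
    have := (Real.hasDerivAt_log (ne_of_gt (one_add_exp_pos y))).comp y h1; exact this
  have h3 : HasDerivAt xC (-((1 + Real.exp (-y))⁻¹ * (-Real.exp (-y)))) y := by
    have := h2.neg; exact this
  convert h3 using 1
  rw [xC']
  field_simp

lemma xC_deriv2 (y : ℝ) : HasDerivAt xC' (xC'' y) y := by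
  have h1 : HasDerivAt (fun y : ℝ => 1 + Real.exp (-y)) (-Real.exp (-y)) y :=
    ((xR_deriv2 y).const_add 1)
  have h2 : HasDerivAt xC' ((-Real.exp (-y) * (1 + Real.exp (-y)) - Real.exp (-y) *
      (-Real.exp (-y))) / (1 + Real.exp (-y)) ^ 2) y := by
    have := (xR_deriv2 y).div h1 (ne_of_gt (one_add_exp_pos y)); exact this
  convert h2 using 1
  rw [xC'']
  have hne : (1 + Real.exp (-y)) ≠ 0 := ne_of_gt (one_add_exp_pos y)
  field_simp
  ring

lemma xC'_pos (y : ℝ) : 0 < xC' y := div_pos (Real.exp_pos _) (one_add_exp_pos y)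

lemma xC_neg (y : ℝ) : xC y < 0 := by
  rw [xC, neg_lt, neg_zero]
  exact Real.log_pos (by linarith [Real.exp_pos (-y)])

lemma xC_exp (y : ℝ) : Real.exp (xC y) = (1 + Real.exp (-y))⁻¹ := by
  rw [xC, Real.exp_neg, Real.exp_log (one_add_exp_pos y)]

lemma xC_exp_neg (y : ℝ) : Real.exp (-xC y) = 1 + Real.exp (-y) := by
  rw [xC, neg_neg, Real.exp_log (one_add_exp_pos y)]

lemma xC_range : range xC = Iio 0 := by
  ext t
  constructor
  · rintro ⟨y, rfl⟩
    exact xC_neg y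
  · intro ht
    have ht' : (0:ℝ) < -t := by simpa using ht.out
    have hgt : 1 < Real.exp (-t) := by
      rw [← Real.exp_zero]
      exact Real.exp_lt_exp.mpr (by linarith)
    refine ⟨-Real.log (Real.exp (-t) - 1), ?_⟩
    rw [xC, neg_neg, Real.exp_log (by linarith)]
    rw [show 1 + (Real.exp (-t) - 1) = Real.exp (-t) by ring, Real.log_exp]
    ring

lemma xC_w (y : ℝ) : xC' y = 1 - Real.exp (xC y) := by
  rw [xC_exp, xC']
  have hne : (1 + Real.exp (-y)) ≠ 0 := ne_of_gt (one_add_exp_pos y)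
  field_simp
  ring

lemma xC_v (y : ℝ) : xC'' y = xC' y * (-Real.exp (xC y)) := by
  rw [xC_exp, xC', xC'']
  have hne : (1 + Real.exp (-y)) ≠ 0 := ne_of_gt (one_add_exp_pos y)
  field_simp

lemma xC_yx (y : ℝ) : -Real.log (Real.exp (-xC y) - 1) = y := by
  rw [xC_exp_neg, show 1 + Real.exp (-y) - 1 = Real.exp (-y) by ring, Real.log_exp, neg_neg]

lemma xC_yb {t : ℝ} (ht : t < 0) : |-Real.log (Real.exp (-t) - 1)| ≤ maj t := by
  have ht' : (0:ℝ) < -t := by linarith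
  have hgt : 1 < Real.exp (-t) := by
    rw [← Real.exp_zero]
    exact Real.exp_lt_exp.mpr (by linarith)
  set s : ℝ := Real.exp (-t) - 1 with hs
  have hspos : 0 < s := by simp [hs]; linarith
  have hst : -t ≤ s := by
    have := Real.add_one_le_exp (-t)
    simp [hs]; linarith
  have h0 : (0:ℝ) ≤ (-t) ^ (-(1/2) : ℝ) := Real.rpow_nonneg ht'.le _
  rw [abs_neg, maj, abs_of_neg ht]
  rcases le_or_gt (Real.log s) 0 with h | h
  · rw [abs_of_nonpos h]
    have h1 : Real.log (-t) ≤ Real.log s := Real.log_le_log ht' hst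
    have h2 := log_abs_bound ht'
    have h4 : -Real.log s ≤ -Real.log (-t) := by linarith
    have h5 : -Real.log (-t) ≤ |Real.log (-t)| := neg_le_abs _
    linarith
  · rw [abs_of_pos h]
    have h1 : s ≤ Real.exp (-t) := by simp [hs]
    have h2 : Real.log s ≤ -t := by
      calc Real.log s ≤ Real.log (Real.exp (-t)) := Real.log_le_log hspos h1
        _ = -t := Real.log_exp _
    linarith

/-- For `x = x_R` or `x = x_C` and a Schwartz function `g` of
positive-frequency type, `∫_0^∞ |ǧ̂(p)|²/(2p) dp < ∞` iff `G(0) = ∫_{-∞}^0 g = 0`;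
consequently the total mean number of extra created particles `∫_0^∞ |ǧ̂(p)|²/p dp`
is finite iff `G(0) = 0`. -/
theorem stmt_12 (x : ℝ → ℝ) (hx : x = xR ∨ x = xC) (g : SchwartzMap ℝ ℂ)
    (hgp : ∀ k : ℝ, k ≤ 0 → ft (⇑g) k = 0) :
    ((∫⁻ p in Set.Ioi (0:ℝ),
        ENNReal.ofReal (‖ft (gout x (⇑g)) p‖ ^ 2 / (2 * p))) < ⊤ ↔
      (∫ t in Set.Iio (0:ℝ), g t) = 0) ∧
    ((∫⁻ p in Set.Ioi (0:ℝ),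
        ENNReal.ofReal (‖ft (gout x (⇑g)) p‖ ^ 2 / p)) < ⊤ ↔
      (∫ t in Set.Iio (0:ℝ), g t) = 0) := by
  have key : (∫⁻ p in Set.Ioi (0:ℝ),
      ENNReal.ofReal (‖ft (gout x (⇑g)) p‖ ^ 2 / (2 * p))) < ⊤ ↔
      (∫ t in Set.Iio (0:ℝ), g t) = 0 := by
    rcases hx with rfl | rfl
    · refine master xR (fun y => Real.exp (-y)) (fun y => -Real.exp (-y))
        (fun t => -t) (fun _ => -1) (fun t => -Real.log (-t))
        xR_deriv xR_deriv2 (fun y => Real.exp_pos _) xR_range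
        (fun y => by simp [xR]) (fun y => by ring) xR_yx
        (fun t _ => by show |(-t)| ≤ 1 + |t|; rw [abs_neg]; linarith [abs_nonneg t])
        (fun t _ => by show |(-1:ℝ)| ≤ 1; norm_num)
        (fun t ht => xR_yb ht)
        ?_ ?_ ?_ g
      · refine ContinuousOn.neg (ContinuousOn.log continuous_neg.continuousOn ?_)
        intro t ht
        have h1 : t < 0 := ht
        show -t ≠ 0
        intro hc
        linarith [neg_eq_zero.mp hc]
      · exact (continuous_neg.continuousOn)
      · exact continuousOn_const
    · refine master xC xC' xC''
        (fun t => 1 - Real.exp t) (fun t => -Real.exp t)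
        (fun t => -Real.log (Real.exp (-t) - 1))
        xC_deriv xC_deriv2 xC'_pos xC_range xC_w xC_v xC_yx
        (fun t ht => by
          show |1 - Real.exp t| ≤ 1 + |t|
          have h1 : Real.exp t < 1 := Real.exp_lt_one_iff.mpr ht
          have h2 : 0 < Real.exp t := Real.exp_pos t
          rw [_root_.abs_of_nonneg (by linarith)]
          have := abs_nonneg t
          linarith)
        (fun t ht => by
          show |(-Real.exp t)| ≤ 1
          rw [abs_neg, _root_.abs_of_nonneg (Real.exp_pos t).le]
          exact Real.exp_le_one_iff.mpr ht.le)
        (fun t ht => xC_yb ht)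
        ?_ ?_ ?_ g
      · refine ContinuousOn.neg (ContinuousOn.log ?_ ?_)
        · exact ((Real.continuous_exp.comp continuous_neg).sub continuous_const).continuousOn
        · intro t ht
          have h1 : t < 0 := ht
          have hgt : 1 < Real.exp (-t) := by
            rw [← Real.exp_zero]
            exact Real.exp_lt_exp.mpr (by linarith)
          show Real.exp (-t) - 1 ≠ 0
          intro hc
          linarith
      · exact (continuous_const.sub Real.continuous_exp).continuousOn
      · exact (Real.continuous_exp.neg).continuousOn
  refine ⟨key, ?_⟩
  have h2 : (∫⁻ p in Set.Ioi (0:ℝ), ENNReal.ofReal (‖ft (gout x (⇑g)) p‖ ^ 2 / p))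
      = 2 * ∫⁻ p in Set.Ioi (0:ℝ),
        ENNReal.ofReal (‖ft (gout x (⇑g)) p‖ ^ 2 / (2 * p)) := by
    rw [← lintegral_const_mul' 2 _ (by norm_num)]
    refine setLIntegral_congr_fun measurableSet_Ioi (fun p hp => ?_)
    have hp0 : (0:ℝ) < p := hp
    rw [show ((2:ℝ≥0∞)) = ENNReal.ofReal (2:ℝ) by simp]
    rw [← ENNReal.ofReal_mul (by norm_num)]
    congr 1
    field_simp
  rw [h2]
  constructor
  · intro hfin
    refine key.mp ?_
    refine lt_of_le_of_lt ?_ hfin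
    conv_lhs => rw [← one_mul (∫⁻ p in Set.Ioi (0:ℝ),
      ENNReal.ofReal (‖ft (gout x (⇑g)) p‖ ^ 2 / (2 * p)))]
    exact mul_le_mul_left (by norm_num) _
  · intro h0
    exact ENNReal.mul_lt_top (by norm_num) (key.mpr h0)
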